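/- Degeneracy of the plus-branch solution (Proposition 3(ii)): define Q_{+,0} := G_c(N,0)^{1/2}S₀^{1/2}(S₀ + (1/2)I + (S₀^{1/2}S_NS₀^{1/2} + (1/4)I)^{1/2})⁻¹S₀^{1/2}G_c(N,0)^{1/2} and let Q_{+,k} satisfy Q_{+,k+1} = A_kQ_{+,k}A_kᵀ − B_kB_kᵀ for k = 0,…,N−1. If Q_{+,k} is invertible for every k ∈ {0,…,N}, then there exists s ∈ {0,…,N−1} such that I + B_sᵀQ_{+,s+1}⁻¹B_s is not positive definite. -/

import Mathlib

open Matrix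

noncomputable section

section helpers

variable {a b : Type*} [Fintype a] [DecidableEq a] [Fintype b] [DecidableEq b]

lemma aux_psd_unit_posDef {M : Matrix a a ℝ} (h : M.PosSemidef) (hd : IsUnit M.det) :
    M.PosDef := by
  refine Matrix.PosDef.of_dotProduct_mulVec_pos h.1 (fun x hx => ?_)
  rcases (h.dotProduct_mulVec_nonneg x).lt_or_eq with hlt | heq
  · exact hlt
  · exfalso
    have h0 : M *ᵥ x = 0 := (h.dotProduct_mulVec_zero_iff x).mp heq.symm
    have hinj : Function.Injective M.mulVec :=
      Matrix.mulVec_injective_iff_isUnit.mpr ((Matrix.isUnit_iff_isUnit_det M).mpr hd)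
    exact hx (hinj (by simp [h0]))

lemma aux_conj_posDef {M E : Matrix a a ℝ} (hM : M.PosDef) (hE : IsUnit E.det) :
    (E * M * Eᵀ).PosDef := by
  have hpsd : (E * M * Eᵀ).PosSemidef := by
    have := hM.posSemidef.mul_mul_conjTranspose_same E
    rwa [conjTranspose_eq_transpose_of_trivial] at this
  apply aux_psd_unit_posDef hpsd
  rw [Matrix.det_mul, Matrix.det_mul, Matrix.det_transpose]
  exact (hE.mul hM.det_pos.ne'.isUnit).mul hE

lemma aux_schur {A : Matrix a a ℝ} {D : Matrix b b ℝ} (C : Matrix a b ℝ)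
    (hA : A.PosDef) (hD : D.PosDef) (h : (D - Cᵀ * A⁻¹ * C).PosSemidef) :
    (A - C * D⁻¹ * Cᵀ).PosSemidef := by
  haveI := A.invertibleOfIsUnitDet hA.det_pos.ne'.isUnit
  haveI := D.invertibleOfIsUnitDet hD.det_pos.ne'.isUnit
  rw [← conjTranspose_eq_transpose_of_trivial] at h ⊢
  exact (Matrix.PosDef.fromBlocks₂₂ A C hD).mp
    ((Matrix.PosDef.fromBlocks₁₁ C D hA).mpr h)

lemma aux_smul_one_posDef {c : ℝ} (hc : 0 < c) : (c • 1 : Matrix a a ℝ).PosDef := by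
  refine Matrix.PosDef.of_dotProduct_mulVec_pos ?_ ?_
  · simp [Matrix.IsHermitian, Matrix.conjTranspose_smul]
  · intro x hx
    have h1 := (Matrix.PosDef.one (n := a) (R := ℝ)).dotProduct_mulVec_pos hx
    rw [one_mulVec] at h1
    rw [Matrix.smul_mulVec, one_mulVec, dotProduct_smul, smul_eq_mul]
    exact mul_pos hc h1

end helpers

/-- `prodAux A l d = A (l+d-1) * ⋯ * A l` (the empty product for `d = 0`). -/
def prodAux {n : ℕ} (A : ℕ → Matrix (Fin n) (Fin n) ℝ) (l : ℕ) :
    ℕ → Matrix (Fin n) (Fin n) ℝ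
  | 0 => 1
  | d + 1 => A (l + d) * prodAux A l d

/-- State-transition matrix `Φ(k,l)`: `A_{k-1} ⋯ A_l` for `k > l`, `I` for `k = l`,
and `A_k⁻¹ ⋯ A_{l-1}⁻¹` for `k < l`. -/
def Phi {n : ℕ} (A : ℕ → Matrix (Fin n) (Fin n) ℝ) (k l : ℕ) :
    Matrix (Fin n) (Fin n) ℝ :=
  if l ≤ k then prodAux A l (k - l) else (prodAux A k (l - k))⁻¹

/-- Reachability Gramian `G_r(k₁,k₀) = Σ_{k=k₀}^{k₁−1} Φ(k₁,k+1) B_k B_kᵀ Φ(k₁,k+1)ᵀ`. -/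
def Gr {n m : ℕ} (A : ℕ → Matrix (Fin n) (Fin n) ℝ) (B : ℕ → Matrix (Fin n) (Fin m) ℝ)
    (k₁ k₀ : ℕ) : Matrix (Fin n) (Fin n) ℝ :=
  ∑ k ∈ Finset.Ico k₀ k₁, Phi A k₁ (k+1) * B k * (B k)ᵀ * (Phi A k₁ (k+1))ᵀ

/-- Controllability Gramian `G_c(k₁,k₀) = Σ_{k=k₀}^{k₁−1} Φ(k₀,k+1) B_k B_kᵀ Φ(k₀,k+1)ᵀ`. -/
def Gc {n m : ℕ} (A : ℕ → Matrix (Fin n) (Fin n) ℝ) (B : ℕ → Matrix (Fin n) (Fin m) ℝ)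
    (k₁ k₀ : ℕ) : Matrix (Fin n) (Fin n) ℝ :=
  ∑ k ∈ Finset.Ico k₀ k₁, Phi A k₀ (k+1) * B k * (B k)ᵀ * (Phi A k₀ (k+1))ᵀ

/-- Degeneracy of the plus-branch solution of the coupled Lyapunov equations. -/
theorem stmt8
    {n m N : ℕ} (hn : 0 < n) (hm : 0 < m) (hN : 0 < N)
    (ε : ℝ) (hε : 0 < ε)
    (A : ℕ → Matrix (Fin n) (Fin n) ℝ) (B : ℕ → Matrix (Fin n) (Fin m) ℝ)
    (hA : ∀ k < N, IsUnit (A k).det)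
    (Sig0 SigN : Matrix (Fin n) (Fin n) ℝ)
    (hSig0 : Sig0.PosDef) (hSigN : SigN.PosDef)
    (kr : ℕ) (hkr1 : 1 ≤ kr) (hkrN : kr ≤ N)
    (hGr1 : ∀ k, kr ≤ k → k ≤ N → IsUnit (Gr A B k 0).det)
    (hGr2 : ∀ k < kr, IsUnit (Gr A B N k).det)
    -- `R` is the positive definite square root of the controllability Gramian `G_c(N,0)`.
    (R : Matrix (Fin n) (Fin n) ℝ) (hR : R.PosDef) (hRR : R * R = Gc A B N 0)
    (S0 SN : Matrix (Fin n) (Fin n) ℝ)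
    (hS0 : S0 = ε⁻¹ • (R⁻¹ * Sig0 * R⁻¹))
    (hSN : SN = ε⁻¹ • (R⁻¹ * Phi A 0 N * SigN * (Phi A 0 N)ᵀ * R⁻¹))
    -- `U` is the positive semidefinite square root of `S₀`.
    (U : Matrix (Fin n) (Fin n) ℝ) (hU : U.PosSemidef) (hUU : U * U = S0)
    -- `T` is the positive semidefinite square root of `S₀^{1/2} S_N S₀^{1/2} + (1/4) I`.
    (T : Matrix (Fin n) (Fin n) ℝ) (hT : T.PosSemidef)
    (hTT : T * T = U * SN * U + (1/4 : ℝ) • 1)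
    -- invertibility of `F(S₀,S_N)` and `B(S₀,S_N)`
    (hF : IsUnit (S0 + (1/2 : ℝ) • 1 - T).det)
    (hB : IsUnit (-S0 + (1/2 : ℝ) • 1 + T).det)
    (Q : ℕ → Matrix (Fin n) (Fin n) ℝ)
    (hQ0 : Q 0 = R * U * (S0 + (1/2 : ℝ) • 1 + T)⁻¹ * U * R)
    (hQrec : ∀ k < N, Q (k+1) = A k * Q k * (A k)ᵀ - B k * (B k)ᵀ)
    (hQinv : ∀ k ≤ N, IsUnit (Q k).det) :
    ∃ s < N,
      ¬ ((1 : Matrix (Fin m) (Fin m) ℝ) + (B s)ᵀ * (Q (s+1))⁻¹ * B s).PosDef := by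
  by_contra hcon
  push_neg at hcon
  -- basic facts
  have hUt : Uᵀ = U := by
    rw [← conjTranspose_eq_transpose_of_trivial]; exact hU.1
  have hRt : Rᵀ = R := by
    rw [← conjTranspose_eq_transpose_of_trivial]; exact hR.1
  set Mx := S0 + (1/2 : ℝ) • 1 + T with hMdef
  have hS0psd : S0.PosSemidef := by
    rw [← hUU]; simpa [pow_two] using hU.pow 2
  have hhalf : ((1/2 : ℝ) • 1 : Matrix (Fin n) (Fin n) ℝ).PosDef :=
    aux_smul_one_posDef (by norm_num)
  have hMpd : Mx.PosDef := (Matrix.PosDef.posSemidef_add hS0psd hhalf).add_posSemidef hT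
  -- transition products
  set Pp : ℕ → Matrix (Fin n) (Fin n) ℝ := fun k => prodAux A 0 k with hPp
  have hPpsucc : ∀ k, Pp (k+1) = A k * Pp k := by
    intro k; simp [hPp, prodAux]
  have hPpdet : ∀ k ≤ N, IsUnit (Pp k).det := by
    intro k
    induction k with
    | zero => intro _; simp [hPp, prodAux]
    | succ k ih =>
      intro hk
      rw [hPpsucc k, Matrix.det_mul]
      exact (hA k (Nat.lt_of_succ_le hk)).mul (ih (Nat.le_of_succ_le hk))
  have hPhi0 : ∀ k : ℕ, Phi A 0 (k+1) = (Pp (k+1))⁻¹ := by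
    intro k; rw [Phi, if_neg (by omega)]; simp [hPp]
  have hGc0 : Gc A B 0 0 = (0 : Matrix (Fin n) (Fin n) ℝ) := by simp [Gc]
  have hGcsucc : ∀ k, Gc A B (k+1) 0
      = Gc A B k 0 + (Pp (k+1))⁻¹ * B k * (B k)ᵀ * ((Pp (k+1))⁻¹)ᵀ := by
    intro k
    rw [Gc, Finset.sum_Ico_succ_top (Nat.zero_le k), hPhi0 k]
    rfl
  -- positive definiteness by induction, using the non-degeneracy hypothesis
  have hPD : ∀ k ≤ N, (Q k).PosDef := by
    intro k
    induction k with
    | zero =>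
      intro _
      apply aux_psd_unit_posDef ?_ (hQinv 0 (Nat.zero_le N))
      have h1 : ((R * U) * Mx⁻¹ * (R * U)ᴴ).PosSemidef :=
        hMpd.inv.posSemidef.mul_mul_conjTranspose_same (R * U)
      have h2 : (R * U) * Mx⁻¹ * (R * U)ᴴ = Q 0 := by
        rw [conjTranspose_eq_transpose_of_trivial, transpose_mul, hUt, hRt, hQ0]
        simp [Matrix.mul_assoc]
      rwa [h2] at h1
    | succ k ih =>
      intro hk1
      have hkN : k < N := Nat.lt_of_succ_le hk1
      have hQk : (Q k).PosDef := ih (le_of_lt hkN)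
      set P := A k * Q k * (A k)ᵀ with hPdef
      have hPpd : P.PosDef := aux_conj_posDef hQk (hA k hkN)
      have hPdet : IsUnit P.det := hPpd.det_pos.ne'.isUnit
      have hqdet : IsUnit (Q (k+1)).det := hQinv (k+1) hk1
      set bb := B k with hbb
      set q := Q (k+1) with hqdef
      have hq : q = P - bb * bbᵀ := hQrec k hkN
      have hq1 : q * q⁻¹ = 1 := Matrix.mul_nonsing_inv _ hqdet
      have hp2 : P⁻¹ * P = 1 := Matrix.nonsing_inv_mul _ hPdet
      have hsum : q + bb * bbᵀ = P := by rw [hq]; abel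
      have step : P⁻¹ + P⁻¹ * (bb * bbᵀ) * q⁻¹ = q⁻¹ := by
        have e1 : P⁻¹ * (q + bb * bbᵀ) * q⁻¹ = P⁻¹ + P⁻¹ * (bb * bbᵀ) * q⁻¹ := by
          rw [Matrix.mul_add, Matrix.add_mul, Matrix.mul_assoc P⁻¹ q q⁻¹, hq1, Matrix.mul_one]
        rw [← e1, hsum, hp2, Matrix.one_mul]
      have hleft : ((1 : Matrix (Fin m) (Fin m) ℝ) - bbᵀ * P⁻¹ * bb)
          * (1 + bbᵀ * q⁻¹ * bb) = 1 := by
        have expand : ((1 : Matrix (Fin m) (Fin m) ℝ) - bbᵀ * P⁻¹ * bb)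
            * (1 + bbᵀ * q⁻¹ * bb)
            = 1 + bbᵀ * (q⁻¹ - (P⁻¹ + P⁻¹ * (bb * bbᵀ) * q⁻¹)) * bb := by
          simp only [Matrix.mul_add, Matrix.add_mul, Matrix.mul_sub, Matrix.sub_mul,
            Matrix.mul_one, Matrix.one_mul, Matrix.mul_assoc]
          abel
        rw [expand, step]
        simp
      have hinv : ((1 : Matrix (Fin m) (Fin m) ℝ) + bbᵀ * q⁻¹ * bb)⁻¹
          = 1 - bbᵀ * P⁻¹ * bb := Matrix.inv_eq_left_inv hleft
      have h1Y : ((1 : Matrix (Fin m) (Fin m) ℝ) - bbᵀ * P⁻¹ * bb).PosDef := by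
        rw [← hinv]
        exact (hcon k hkN).inv
      have hschur : (P - bb * bbᵀ).PosSemidef := by
        have h3 : ((1 : Matrix (Fin m) (Fin m) ℝ) - bbᵀ * P⁻¹ * bb).PosSemidef :=
          h1Y.posSemidef
        have := aux_schur bb hPpd (Matrix.PosDef.one (n := Fin m) (R := ℝ)) h3
        rwa [inv_one, Matrix.mul_one] at this
      exact aux_psd_unit_posDef (hq ▸ hschur) hqdet
  -- key conservation identity
  have hkey : ∀ k ≤ N, Q k = Pp k * (Q 0 - Gc A B k 0) * (Pp k)ᵀ := by
    intro k
    induction k with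
    | zero => intro _; simp [hPp, prodAux, hGc0]
    | succ k ih =>
      intro hk1
      have hkN : k < N := Nat.lt_of_succ_le hk1
      have ihk := ih (le_of_lt hkN)
      have hZ : Pp (k+1) * (Pp (k+1))⁻¹ = 1 :=
        Matrix.mul_nonsing_inv _ (hPpdet (k+1) hk1)
      have hZT : ((Pp (k+1))⁻¹)ᵀ * (Pp (k+1))ᵀ = 1 := by
        rw [← Matrix.transpose_mul, hZ, Matrix.transpose_one]
      rw [hQrec k hkN, ihk, hGcsucc k]
      have e : Pp (k+1) * (Q 0 - (Gc A B k 0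
            + (Pp (k+1))⁻¹ * B k * (B k)ᵀ * ((Pp (k+1))⁻¹)ᵀ)) * (Pp (k+1))ᵀ
          = Pp (k+1) * (Q 0 - Gc A B k 0) * (Pp (k+1))ᵀ
            - (Pp (k+1) * (Pp (k+1))⁻¹) * (B k * (B k)ᵀ)
              * (((Pp (k+1))⁻¹)ᵀ * (Pp (k+1))ᵀ) := by
        simp only [Matrix.mul_add, Matrix.add_mul, Matrix.mul_sub, Matrix.sub_mul,
          Matrix.mul_assoc]
        abel
      rw [e, hZ, hZT, Matrix.one_mul, Matrix.mul_one, hPpsucc k]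
      have e2 : A k * Pp k * (Q 0 - Gc A B k 0) * (A k * Pp k)ᵀ
          = A k * (Pp k * (Q 0 - Gc A B k 0) * (Pp k)ᵀ) * (A k)ᵀ := by
        rw [Matrix.transpose_mul]
        simp [Matrix.mul_assoc]
      rw [e2]
  -- final contradiction
  have hQN := hkey N le_rfl
  have hQNpd := hPD N le_rfl
  have hGcQ : (Gc A B N 0 - Q 0).PosSemidef := by
    have hdiffpsd : (Mx - Uᵀ * (1 : Matrix (Fin n) (Fin n) ℝ)⁻¹ * U).PosSemidef := by
      have : Mx - Uᵀ * (1 : Matrix (Fin n) (Fin n) ℝ)⁻¹ * U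
          = (1/2 : ℝ) • 1 + T := by
        rw [inv_one, Matrix.mul_one, hUt, hUU, hMdef]
        abel
      rw [this]
      exact (hhalf.add_posSemidef hT).posSemidef
    have h1 : ((1 : Matrix (Fin n) (Fin n) ℝ) - U * Mx⁻¹ * Uᵀ).PosSemidef :=
      aux_schur U (Matrix.PosDef.one (n := Fin n) (R := ℝ)) hMpd hdiffpsd
    rw [hUt] at h1
    have h2 : (R * ((1 : Matrix (Fin n) (Fin n) ℝ) - U * Mx⁻¹ * U) * Rᴴ).PosSemidef :=
      h1.mul_mul_conjTranspose_same R
    have h3 : R * ((1 : Matrix (Fin n) (Fin n) ℝ) - U * Mx⁻¹ * U) * Rᴴ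
        = Gc A B N 0 - Q 0 := by
      rw [conjTranspose_eq_transpose_of_trivial, hRt, ← hRR, hQ0]
      noncomm_ring
    rwa [h3] at h2
  have h4 : (Pp N * (Gc A B N 0 - Q 0) * (Pp N)ᵀ).PosSemidef := by
    have := hGcQ.mul_mul_conjTranspose_same (Pp N)
    rwa [conjTranspose_eq_transpose_of_trivial] at this
  have h5 : Pp N * (Gc A B N 0 - Q 0) * (Pp N)ᵀ = - Q N := by
    rw [hQN]; noncomm_ring
  set x : Fin n → ℝ := fun _ => 1 with hxdef
  have hx : x ≠ 0 := by
    intro h0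
    have := congrFun h0 ⟨0, hn⟩
    simp [hxdef] at this
  have hpos := hQNpd.dotProduct_mulVec_pos hx
  have hneg := h4.dotProduct_mulVec_nonneg x
  rw [h5, Matrix.neg_mulVec, dotProduct_neg] at hneg
  linarith

end
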